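/- Let ν : ℝ → ℝ be the out-of-plane primer component satisfying ν'' = (-γ/r³ + (v_θ/r)²) ν along a Keplerian orbit, where r and v_θ satisfy r' = v_r, v_r' = (v_θ² - γ/r)/r, v_θ' = -v_r v_θ / r. Then ν(t) = E / v_θ(t) is a solution for any constant E. -/

import Mathlib

open Matrix

/-- Euclidean norm of a vector in ℝ³. -/
noncomputable def e3norm (x : Fin 3 → ℝ) : ℝ := Real.sqrt (x ⬝ᵥ x)

theorem stmt10 (γ E : ℝ) (hγ : 0 < γ) (r vr vθ : ℝ → ℝ)
    (hrpos : ∀ t, 0 < r t) (hvθpos : ∀ t, 0 < vθ t)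
    (hr : Differentiable ℝ r) (hvr : Differentiable ℝ vr) (hvθ : Differentiable ℝ vθ)
    (hreq : ∀ t, deriv r t = vr t)
    (hvreq : ∀ t, deriv vr t = ((vθ t)^2 - γ / r t) / r t)
    (hvθeq : ∀ t, deriv vθ t = -(vr t * vθ t) / r t) :
    ∀ t, deriv (deriv (fun s => E / vθ s)) t =
      (-γ / (r t)^3 + (vθ t / r t)^2) * (E / vθ t) := by
  intro t
  have h1 : deriv (fun s => E / vθ s) = fun s => E * vr s / (r s * vθ s) := by
    funext s
    have hv : vθ s ≠ 0 := (hvθpos s).ne'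
    have hrr : r s ≠ 0 := (hrpos s).ne'
    rw [deriv_fun_div (differentiableAt_const E) (hvθ s) hv]
    rw [deriv_const, hvθeq s]
    field_simp
    ring
  rw [h1]
  have hv : vθ t ≠ 0 := (hvθpos t).ne'
  have hrr : r t ≠ 0 := (hrpos t).ne'
  have hnum : DifferentiableAt ℝ (fun s => E * vr s) t :=
    (differentiable_const E).mul hvr |>.differentiableAt
  have hden : DifferentiableAt ℝ (fun s => r s * vθ s) t :=
    (hr.mul hvθ).differentiableAt
  rw [deriv_fun_div hnum hden (mul_ne_zero hrr hv)]
  rw [deriv_const_mul E (hvr t), deriv_fun_mul (hr t) (hvθ t)]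
  rw [hvreq t, hvθeq t, hreq t]
  field_simp
  ring
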